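/- For any categorical distribution θ on a finite nonempty set X and any α₀ ∈ ℝ, the function α ↦ H(T(θ,α)) is differentiable at α₀ with derivative −α₀·V(T(θ,α₀)||θ). -/

import Mathlib

open Real BigOperators
open scoped Classical

variable {X : Type*}

/-- A categorical distribution on a finite set: positive everywhere and sums to 1. -/
def IsCatDist [Fintype X] (θ : X → ℝ) : Prop :=
  (∀ x, 0 < θ x) ∧ ∑ x, θ x = 1

/-- The tilt of order `α` of a categorical distribution. -/
noncomputable def tilt [Fintype X] (θ : X → ℝ) (α : ℝ) : X → ℝ :=
  fun x => θ x ^ α / ∑ y, θ y ^ α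

/-- Shannon entropy (natural log). -/
noncomputable def shannonEntropy [Fintype X] (ρ : X → ℝ) : ℝ :=
  ∑ x, ρ x * Real.log (1 / ρ x)

/-- Cross entropy `H(ρ‖θ)`. -/
noncomputable def crossEntropy [Fintype X] (ρ θ : X → ℝ) : ℝ :=
  ∑ x, ρ x * Real.log (1 / θ x)

/-- Relative entropy (KL divergence) `D(ρ‖θ)`. -/
noncomputable def relEntropy [Fintype X] (ρ θ : X → ℝ) : ℝ :=
  ∑ x, ρ x * Real.log (ρ x / θ x)

/-- Rényi entropy of order `α`. -/
noncomputable def renyiEntropy [Fintype X] (θ : X → ℝ) (α : ℝ) : ℝ :=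
  (1 / (1 - α)) * Real.log (∑ x, θ x ^ α)

/-- Varentropy. -/
noncomputable def varentropy [Fintype X] (ρ : X → ℝ) : ℝ :=
  ∑ x, ρ x * (Real.log (1 / ρ x) - shannonEntropy ρ) ^ 2

/-- Cross varentropy. -/
noncomputable def crossVarentropy [Fintype X] (ρ θ : X → ℝ) : ℝ :=
  ∑ x, ρ x * (Real.log (1 / θ x) - crossEntropy ρ θ) ^ 2

/-- Probability of an `n`-string under the i.i.d. extension of `θ`. -/
noncomputable def strProb (θ : X → ℝ) {n : ℕ} (x : Fin n → X) : ℝ := ∏ i, θ (x i)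

/-- Probability of a set of `n`-strings. -/
noncomputable def setProb [Fintype X] (θ : X → ℝ) {n : ℕ} (S : Finset (Fin n → X)) : ℝ :=
  ∑ x ∈ S, strProb θ x

/-- `θ` has a unique maximizer and a unique minimizer. -/
def UniqueExtremizers [Fintype X] (θ : X → ℝ) : Prop :=
  (∃! x : X, ∀ y, θ y ≤ θ x) ∧ (∃! x : X, ∀ y, θ x ≤ θ y)

/-- Tilted weakly typical set of order `α`. -/
noncomputable def typicalSetA [Fintype X] (θ : X → ℝ) (α : ℝ) (n : ℕ) (ε : ℝ) :
    Finset (Fin n → X) :=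
  Finset.univ.filter (fun x =>
    Real.exp (-(n : ℝ) * crossEntropy (tilt θ α) θ - n * ε) < strProb θ x ∧
    strProb θ x < Real.exp (-(n : ℝ) * crossEntropy (tilt θ α) θ + n * ε))

/-- The set `D^n_{θ,α,ε}`. -/
noncomputable def setD [Fintype X] (θ : X → ℝ) (α : ℝ) (n : ℕ) (ε : ℝ) :
    Finset (Fin n → X) :=
  Finset.univ.filter (fun x =>
    strProb (tilt θ α) x > Real.exp (-(n : ℝ) * shannonEntropy (tilt θ α) - n * |α| * ε))

/-- The set `E^n_{θ,α,ε}`. -/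
noncomputable def setE [Fintype X] (θ : X → ℝ) (α : ℝ) (n : ℕ) (ε : ℝ) :
    Finset (Fin n → X) :=
  Finset.univ.filter (fun x =>
    strProb (tilt θ α) x < Real.exp (-(n : ℝ) * shannonEntropy (tilt θ α) + n * |α| * ε))

/-- A guesswork function for `θ` on `n`-strings: a bijection onto `{1,…,|X|^n}`
that orders strings from most likely to least likely. -/
def IsGuesswork [Fintype X] (θ : X → ℝ) {n : ℕ} (G : (Fin n → X) → ℕ) : Prop :=
  Function.Injective G ∧
  (∀ x, G x ∈ Finset.Icc 1 (Fintype.card X ^ n)) ∧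
  (∀ m ∈ Finset.Icc 1 (Fintype.card X ^ n), ∃ x, G x = m) ∧
  (∀ x y, strProb θ x > strProb θ y → G x < G y)

theorem hasDerivAt_shannonEntropy_tilt [Fintype X] [Nonempty X] (θ : X → ℝ)
    (hθ : IsCatDist θ) (α₀ : ℝ) :
    HasDerivAt (fun α : ℝ => shannonEntropy (tilt θ α))
      (-α₀ * crossVarentropy (tilt θ α₀) θ) α₀ := by
  obtain ⟨hpos, -⟩ := hθ
  set Z : ℝ → ℝ := fun a => ∑ x, θ x ^ a with hZdef
  set Z1 : ℝ → ℝ := fun a => ∑ x, θ x ^ a * Real.log (θ x) with hZ1def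
  set Z2 : ℝ → ℝ := fun a => ∑ x, θ x ^ a * Real.log (θ x) ^ 2 with hZ2def
  have hZpos : ∀ a, 0 < Z a := fun a =>
    Finset.sum_pos (fun x _ => Real.rpow_pos_of_pos (hpos x) a) Finset.univ_nonempty
  have hZne : ∀ a, Z a ≠ 0 := fun a => (hZpos a).ne'
  -- derivative facts
  have hdZ : ∀ a, HasDerivAt Z (Z1 a) a := by
    intro a
    apply HasDerivAt.fun_sum
    intro x _
    exact (Real.hasStrictDerivAt_const_rpow (hpos x) a).hasDerivAt
  have hdZ1 : ∀ a, HasDerivAt Z1 (Z2 a) a := by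
    intro a
    apply HasDerivAt.fun_sum
    intro x _
    have := ((Real.hasStrictDerivAt_const_rpow (hpos x) a).hasDerivAt).mul_const
      (Real.log (θ x))
    convert this using 1
    · rfl
    ring
  -- entropy formula
  have hH : ∀ a, shannonEntropy (tilt θ a) = Real.log (Z a) - a * Z1 a / Z a := by
    intro a
    have hterm : ∀ x : X, tilt θ a x * Real.log (1 / tilt θ a x)
        = θ x ^ a / Z a * Real.log (Z a) - a * (θ x ^ a * Real.log (θ x)) / Z a := by
      intro x
      have h1 : tilt θ a x = θ x ^ a / Z a := rfl
      have hlog : Real.log (1 / tilt θ a x) = Real.log (Z a) - a * Real.log (θ x) := by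
        rw [h1, one_div, Real.log_inv, Real.log_div (Real.rpow_pos_of_pos (hpos x) a).ne'
          (hZne a), Real.log_rpow (hpos x)]
        ring
      rw [hlog, h1]
      field_simp
    have hZa : ∑ x, θ x ^ a = Z a := rfl
    have hZ1a : ∑ x, θ x ^ a * Real.log (θ x) = Z1 a := rfl
    rw [shannonEntropy]
    simp only [hterm]
    rw [Finset.sum_sub_distrib]
    congr 1
    · rw [← Finset.sum_mul, ← Finset.sum_div, hZa, div_self (hZne a), one_mul]
    · rw [← Finset.sum_div, ← Finset.mul_sum, hZ1a]
  -- cross entropy / varentropy formulas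
  have hsum1 : ∑ x, tilt θ α₀ x = 1 := by
    simp only [tilt, ← Finset.sum_div]
    exact div_self (hZne α₀)
  have hsumlog : ∑ x, tilt θ α₀ x * Real.log (θ x) = Z1 α₀ / Z α₀ := by
    simp only [tilt, hZ1def, Finset.sum_div]
    exact Finset.sum_congr rfl fun x _ => by ring
  have hsumlog2 : ∑ x, tilt θ α₀ x * Real.log (θ x) ^ 2 = Z2 α₀ / Z α₀ := by
    simp only [tilt, hZ2def, Finset.sum_div]
    exact Finset.sum_congr rfl fun x _ => by ring
  have hCE : crossEntropy (tilt θ α₀) θ = -(Z1 α₀ / Z α₀) := by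
    rw [crossEntropy]
    simp only [one_div, Real.log_inv, mul_neg]
    rw [Finset.sum_neg_distrib, hsumlog]
  have hCV : crossVarentropy (tilt θ α₀) θ = Z2 α₀ / Z α₀ - (Z1 α₀ / Z α₀) ^ 2 := by
    rw [crossVarentropy, hCE]
    have : ∀ x : X, tilt θ α₀ x * (Real.log (1 / θ x) - -(Z1 α₀ / Z α₀)) ^ 2
        = tilt θ α₀ x * Real.log (θ x) ^ 2
          - (2 * (Z1 α₀ / Z α₀)) * (tilt θ α₀ x * Real.log (θ x))
          + (Z1 α₀ / Z α₀) ^ 2 * tilt θ α₀ x := by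
      intro x
      rw [one_div, Real.log_inv]
      ring
    simp only [this]
    rw [Finset.sum_add_distrib, Finset.sum_sub_distrib, ← Finset.mul_sum, ← Finset.mul_sum,
      hsumlog, hsumlog2, hsum1]
    ring
  -- derivative computation
  have hfun : (fun α : ℝ => shannonEntropy (tilt θ α))
      = fun α : ℝ => Real.log (Z α) - α * Z1 α / Z α := funext hH
  rw [hfun, hCV]
  have hd1 : HasDerivAt (fun a : ℝ => Real.log (Z a)) (Z1 α₀ / Z α₀) α₀ :=
    (hdZ α₀).log (hZne α₀)
  have hd2 : HasDerivAt (fun a : ℝ => a * Z1 a / Z a)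
      (((Z1 α₀ + α₀ * Z2 α₀) * Z α₀ - α₀ * Z1 α₀ * Z1 α₀) / Z α₀ ^ 2) α₀ := by
    have hnum : HasDerivAt (fun a : ℝ => a * Z1 a) (Z1 α₀ + α₀ * Z2 α₀) α₀ := by
      simpa using (hasDerivAt_id' α₀).fun_mul (hdZ1 α₀)
    exact hnum.div (hdZ α₀) (hZne α₀)
  have := hd1.fun_sub hd2
  convert this using 1
  have hZ0 := hZne α₀
  · rfl
  · rfl
  field_simp
  ring
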